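/- arXiv:1905.06595 — 2 statements merged into one kernel-verified Lean document; each statement's English description precedes it below -/
import Mathlib

section
/- Let P = (v₀,v₁,…,v_{2p+1}) be a path with edges e_i = v_{i−1}v_i for 1 ≤ i ≤ 2p+1, where p ≥ 2, and let m ≥ 2p+1. Define φ(e_{2i+1}) = i+1 for 0 ≤ i ≤ p and φ(e_{2i}) = m−p+i for 1 ≤ i ≤ p. Then the vertex sums in P satisfy: s(v₀) = 1, s(v_{2p+1}) = p+1, and s(v_i) = m−p+i+1 for 1 ≤ i ≤ 2p; moreover the residues of the vertex sums modulo m+2 form the set ([0,p+1]∖{p}) ∪ [m−p+2,m+1], and the only pair of vertices whose sums agree modulo m+2 is (v₀, v_{p+2}). -/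
/-- Let `P = (v₀, …, v_{2p+1})` be a path with edges `e_i = v_{i-1} v_i` for
`1 ≤ i ≤ 2p+1`, where `p ≥ 2` and `m ≥ 2p+1`. Label `φ(e_{2i+1}) = i+1` for
`0 ≤ i ≤ p` and `φ(e_{2i}) = m−p+i` for `1 ≤ i ≤ p`. Here `s i` denotes the vertex
sum of `v_i`: `s 0 = φ(e_1)`, `s (2p+1) = φ(e_{2p+1})`, `s i = φ(e_i) + φ(e_{i+1})`
for `1 ≤ i ≤ 2p`. Then `s(v₀) = 1`, `s(v_{2p+1}) = p+1`, `s(v_i) = m−p+i+1` for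
`1 ≤ i ≤ 2p`; the residues of the vertex sums modulo `m+2` form the set
`([0,p+1] \ {p}) ∪ [m−p+2, m+1]`; and the only pair of distinct vertices with equal
sums modulo `m+2` is `(v₀, v_{p+2})`. -/
theorem stmt7 (p m : ℕ) (hp : 2 ≤ p) (hm : 2 * p + 1 ≤ m)
    (φ : ℕ → ℕ)
    (hφodd : ∀ i ≤ p, φ (2 * i + 1) = i + 1)
    (hφeven : ∀ i, 1 ≤ i → i ≤ p → φ (2 * i) = m - p + i)
    (s : ℕ → ℕ)
    (hs0 : s 0 = φ 1)
    (hslast : s (2 * p + 1) = φ (2 * p + 1))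
    (hsmid : ∀ i, 1 ≤ i → i ≤ 2 * p → s i = φ i + φ (i + 1)) :
    (s 0 = 1 ∧ s (2 * p + 1) = p + 1 ∧
      ∀ i, 1 ≤ i → i ≤ 2 * p → s i = m - p + i + 1) ∧
    ({x : ℕ | ∃ i ≤ 2 * p + 1, s i % (m + 2) = x} =
      (Set.Icc 0 (p + 1) \ {p}) ∪ Set.Icc (m - p + 2) (m + 1)) ∧
    (∀ i j, i ≤ 2 * p + 1 → j ≤ 2 * p + 1 → i ≠ j →
      (s i % (m + 2) = s j % (m + 2) ↔ ({i, j} : Set ℕ) = {0, p + 2})) := by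
  have h0 : s 0 = 1 := by
    have h := hφodd 0 (Nat.zero_le p)
    norm_num at h
    rw [hs0, h]
  have hlast : s (2 * p + 1) = p + 1 := by
    rw [hslast, hφodd p le_rfl]
  have hmid : ∀ i, 1 ≤ i → i ≤ 2 * p → s i = m - p + i + 1 := by
    intro i h1 h2
    rw [hsmid i h1 h2]
    rcases Nat.even_or_odd i with ⟨k, hk⟩ | ⟨k, hk⟩
    · subst hk
      have e1 : k + k = 2 * k := by ring
      have e2 : k + k + 1 = 2 * k + 1 := by ring
      rw [e2, e1, hφeven k (by omega) (by omega), hφodd k (by omega)]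
      omega
    · subst hk
      have e2 : 2 * k + 1 + 1 = 2 * (k + 1) := by ring
      rw [e2, hφodd k (by omega), hφeven (k + 1) (by omega) (by omega)]
      omega
  have hres : ∀ i ≤ 2 * p + 1, s i % (m + 2) =
      if i = 0 then 1 else if i = 2 * p + 1 then p + 1
      else if i ≤ p then m - p + i + 1 else i - p - 1 := by
    intro i hi
    by_cases hi0 : i = 0
    · subst hi0; rw [h0, if_pos rfl]; exact Nat.mod_eq_of_lt (by omega)
    by_cases hil : i = 2 * p + 1
    · subst hil
      rw [hlast, if_neg (by omega), if_pos rfl]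
      exact Nat.mod_eq_of_lt (by omega)
    rw [if_neg hi0, if_neg hil]
    have hs := hmid i (by omega) (by omega)
    by_cases hip : i ≤ p
    · rw [if_pos hip, hs]
      exact Nat.mod_eq_of_lt (by omega)
    · rw [if_neg hip, hs]
      have : m - p + i + 1 = (m + 2) + (i - p - 1) := by omega
      rw [this, Nat.add_mod_left]
      exact Nat.mod_eq_of_lt (by omega)
  refine ⟨⟨h0, hlast, hmid⟩, ?_, ?_⟩
  · ext x
    simp only [Set.mem_setOf_eq, Set.mem_union, Set.mem_diff, Set.mem_Icc,
      Set.mem_singleton_iff]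
    constructor
    · rintro ⟨i, hi, hx⟩
      rw [hres i hi] at hx
      split_ifs at hx <;> omega
    · rintro (⟨⟨hx1, hx2⟩, hxp⟩ | ⟨hx1, hx2⟩)
      · by_cases hx0 : x = 0
        · exact ⟨p + 1, by omega, by
            rw [hres (p + 1) (by omega), if_neg (by omega), if_neg (by omega),
              if_neg (by omega)]; omega⟩
        by_cases hxp1 : x = p + 1
        · exact ⟨2 * p + 1, by omega, by
            rw [hres (2 * p + 1) (by omega), if_neg (by omega), if_pos rfl]; omega⟩
        · exact ⟨p + 1 + x, by omega, by
            rw [hres (p + 1 + x) (by omega), if_neg (by omega), if_neg (by omega),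
              if_neg (by omega)]; omega⟩
      · refine ⟨x - (m - p) - 1, by omega, ?_⟩
        rw [hres (x - (m - p) - 1) (by omega), if_neg (by omega), if_neg (by omega),
          if_pos (by omega)]
        omega
  · intro i j hi hj hij
    have key : s i % (m + 2) = s j % (m + 2) ↔
        ((i = 0 ∧ j = p + 2) ∨ (i = p + 2 ∧ j = 0)) := by
      rw [hres i hi, hres j hj]
      split_ifs <;> omega
    rw [key]
    constructor
    · rintro (⟨rfl, rfl⟩ | ⟨rfl, rfl⟩)
      · rfl
      · exact Set.pair_comm _ _
    · intro h
      have h1 : i ∈ ({0, p + 2} : Set ℕ) := h ▸ Set.mem_insert i {j}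
      have h2 : j ∈ ({0, p + 2} : Set ℕ) := by
        rw [← h]; exact Set.mem_insert_of_mem i rfl
      simp only [Set.mem_insert_iff, Set.mem_singleton_iff] at h1 h2
      omega
end

section
/- Let p ≥ 1, ℓ ≥ 1, and m ≥ 2(p+ℓ)+1. Consider the tree T₁ formed by a path (v₀,…,v_{2p}) together with a path (x₀ = v_{2p+1}, x₁, …, x_ℓ) attached at v_{2p} via edge e_{2p+1} = v_{2p}x₀, and pendant vertices y₀,…,y_{ℓ−1} with edges x_i y_i. Label: φ(e_{2i−1}) = m−p+i and φ(e_{2i}) = i for 1 ≤ i ≤ (p−2)/2 (p even), φ(e_{2i+1}) = i+1 and φ(e_{2i}) = m−p+i on the remaining path edges as in the base labeling, φ(e_{2p+1}) = p+ℓ+1, φ(x_i x_{i+1}) = p+i+1 for 0 ≤ i ≤ ℓ−1, and φ(x_i y_i) = m−p−i for 0 ≤ i ≤ ℓ−1. Then the set of labels used is [1, p+ℓ+1] ∪ [m−p−ℓ+1, m], the residues of the vertex sums modulo m+2 form [0, p+ℓ] ∪ ([m−p−ℓ+1, m+1]∖{m−1}), and the only two vertices with equal residue are x₀ and x_ℓ,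 which nevertheless have different vertex sums (s(x₀) = m+p+ℓ+2 > p+ℓ = s(x_ℓ)). -/
set_option maxHeartbeats 1000000



private lemma aux_labels (p m q : ℕ) {ℓ : ℕ} (hp : 1 ≤ p) (hℓ : 1 ≤ ℓ)
    (hm : 2 * (p + ℓ) + 1 ≤ m) (hpq : p = 2 * q + 2)
    (φe φx φy : ℕ → ℕ)
    (he_ol : ∀ j, 1 ≤ j → j ≤ q → φe (2 * j - 1) = m - p + j)
    (he_el : ∀ j, 1 ≤ j → j ≤ q → φe (2 * j) = j)
    (he_oh : ∀ j, q ≤ j → j ≤ p - 1 → φe (2 * j + 1) = j + 1)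
    (he_eh : ∀ j, q < j → j ≤ p → φe (2 * j) = m - p + j)
    (hlast : φe (2 * p + 1) = p + ℓ + 1)
    (hφx : ∀ i < ℓ, φx i = p + i + 1)
    (hφy : ∀ i < ℓ, φy i = m - p - i) :
    ({n : ℕ | ∃ i, 1 ≤ i ∧ i ≤ 2 * p + 1 ∧ φe i = n} ∪
      {n : ℕ | ∃ i < ℓ, φx i = n} ∪ {n : ℕ | ∃ i < ℓ, φy i = n} =
      Set.Icc 1 (p + ℓ + 1) ∪ Set.Icc (m - p - ℓ + 1) m) := by
  ext x
  simp only [Set.mem_union, Set.mem_setOf_eq, Set.mem_Icc]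
  constructor
  · rintro ((⟨i, hi1, hi2, hi3⟩ | ⟨i, hi, hi3⟩) | ⟨i, hi, hi3⟩)
    · subst hi3
      by_cases hlst : i = 2 * p + 1
      · have hv : φe i = p + ℓ + 1 := by rw [hlst]; exact hlast
        omega
      · rcases Nat.even_or_odd i with ⟨j, hj⟩ | ⟨j, hj⟩
        · have hij : i = 2 * j := by omega
          subst hij
          by_cases hjq : j ≤ q
          · have hv := he_el j (by omega) hjq
            omega
          · have hv := he_eh j (by omega) (by omega)
            omega
        · subst hj
          by_cases hjq : j + 1 ≤ q
          · have hv := he_ol (j + 1) (by omega) hjq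
            rw [show 2 * (j + 1) - 1 = 2 * j + 1 by omega] at hv
            omega
          · have hv := he_oh j (by omega) (by omega)
            omega
    · have hv := hφx i hi
      omega
    · have hv := hφy i hi
      omega
  · intro hx
    rcases hx with ⟨h1, h2⟩ | ⟨h1, h2⟩
    · by_cases c : x ≤ q
      · exact Or.inl (Or.inl ⟨2 * x, by omega, by omega, he_el x (by omega) c⟩)
      · by_cases c2 : x ≤ p
        · refine Or.inl (Or.inl ⟨2 * x - 1, by omega, by omega, ?_⟩)
          rw [show 2 * x - 1 = 2 * (x - 1) + 1 by omega]
          have := he_oh (x - 1) (by omega) (by omega)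
          omega
        · by_cases c3 : x ≤ p + ℓ
          · refine Or.inl (Or.inr ⟨x - p - 1, by omega, ?_⟩)
            have := hφx (x - p - 1) (by omega)
            omega
          · refine Or.inl (Or.inl ⟨2 * p + 1, by omega, le_rfl, ?_⟩)
            rw [hlast]; omega
    · by_cases c : x ≤ m - p
      · refine Or.inr ⟨m - p - x, by omega, ?_⟩
        have := hφy (m - p - x) (by omega)
        omega
      · by_cases c2 : x ≤ m - p + q
        · refine Or.inl (Or.inl ⟨2 * (x - (m - p)) - 1, by omega, by omega, ?_⟩)
          have := he_ol (x - (m - p)) (by omega) (by omega)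
          omega
        · refine Or.inl (Or.inl ⟨2 * (x - (m - p)), by omega, by omega, ?_⟩)
          have := he_eh (x - (m - p)) (by omega) (by omega)
          omega

private lemma aux_resset (p m q : ℕ) {ℓ : ℕ} (hp : 1 ≤ p) (hℓ : 1 ≤ ℓ)
    (hm : 2 * (p + ℓ) + 1 ≤ m) (hpq : p = 2 * q + 2)
    (a b c : ℕ → ℕ)
    (ha : ∀ i ≤ 2 * p, a i =
      if i = 2 * q then p - 1 else if i = 2 * p then p + ℓ - 1
      else if i ≤ p then m - p + i + 1 else i - p - 1)
    (hb : ∀ i ≤ ℓ, b i = if i = 0 then p + ℓ else if i = ℓ then p + ℓ else p + i - 1)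
    (hc : ∀ i < ℓ, c i = m - p - i) :
    ({x : ℕ | ∃ i ≤ 2 * p, a i = x} ∪
      {x : ℕ | ∃ i ≤ ℓ, b i = x} ∪ {x : ℕ | ∃ i < ℓ, c i = x} =
      Set.Icc 0 (p + ℓ) ∪ (Set.Icc (m - p - ℓ + 1) (m + 1) \ {m - 1})) := by
  ext x
  simp only [Set.mem_union, Set.mem_setOf_eq, Set.mem_Icc, Set.mem_diff,
    Set.mem_singleton_iff]
  constructor
  · rintro ((⟨i, hi, h⟩ | ⟨i, hi, h⟩) | ⟨i, hi, h⟩)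
    · rw [ha i hi] at h
      split_ifs at h <;> omega
    · rw [hb i hi] at h
      split_ifs at h <;> omega
    · rw [hc i hi] at h
      omega
  · intro hx
    rcases hx with ⟨h0, h1⟩ | ⟨⟨h1, h2⟩, h3⟩
    · by_cases c1 : x ≤ p - 2
      · refine Or.inl (Or.inl ⟨x + p + 1, by omega, ?_⟩)
        rw [ha (x + p + 1) (by omega), if_neg (by omega), if_neg (by omega),
          if_neg (by omega)]
        omega
      · by_cases c2 : x = p - 1
        · refine Or.inl (Or.inl ⟨2 * q, by omega, ?_⟩)
          rw [ha (2 * q) (by omega), if_pos rfl]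
          omega
        · by_cases c3 : x ≤ p + ℓ - 2
          · refine Or.inl (Or.inr ⟨x - p + 1, by omega, ?_⟩)
            rw [hb (x - p + 1) (by omega), if_neg (by omega), if_neg (by omega)]
            omega
          · by_cases c4 : x = p + ℓ - 1
            · refine Or.inl (Or.inl ⟨2 * p, le_rfl, ?_⟩)
              rw [ha (2 * p) le_rfl, if_neg (by omega), if_pos rfl]
              omega
            · refine Or.inl (Or.inr ⟨ℓ, le_rfl, ?_⟩)
              rw [hb ℓ le_rfl, if_neg (by omega), if_pos rfl]
              omega
    · by_cases c : x ≤ m - p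
      · refine Or.inr ⟨m - p - x, by omega, ?_⟩
        rw [hc (m - p - x) (by omega)]
        omega
      · refine Or.inl (Or.inl ⟨x - (m - p + 1), by omega, ?_⟩)
        rw [ha (x - (m - p + 1)) (by omega), if_neg (by omega), if_neg (by omega),
          if_pos (by omega)]
        omega

private lemma aux_svinj (p m q : ℕ) {ℓ : ℕ} (hp : 1 ≤ p) (hℓ : 1 ≤ ℓ)
    (hm : 2 * (p + ℓ) + 1 ≤ m) (hpq : p = 2 * q + 2)
    (a : ℕ → ℕ)
    (ha : ∀ i ≤ 2 * p, a i =
      if i = 2 * q then p - 1 else if i = 2 * p then p + ℓ - 1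
      else if i ≤ p then m - p + i + 1 else i - p - 1) :
    ∀ i ≤ 2 * p, ∀ j ≤ 2 * p, a i = a j → i = j := by
  intro i hi j hj h
  rw [ha i hi, ha j hj] at h
  split_ifs at h <;> omega

private lemma aux_sxpair (p m : ℕ) {ℓ : ℕ} (hp : 1 ≤ p) (hℓ : 1 ≤ ℓ)
    (hm : 2 * (p + ℓ) + 1 ≤ m)
    (b : ℕ → ℕ)
    (hb : ∀ i ≤ ℓ, b i = if i = 0 then p + ℓ else if i = ℓ then p + ℓ else p + i - 1) :
    ∀ i ≤ ℓ, ∀ j ≤ ℓ, b i = b j → i = j ∨ ({i, j} : Set ℕ) = {0, ℓ} := by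
  intro i hi j hj h
  rw [hb i hi, hb j hj] at h
  split_ifs at h
  all_goals try (left; omega)
  all_goals
    right
    first
    | (have e1 : i = 0 := by omega
       have e2 : j = ℓ := by omega
       rw [e1, e2])
    | (have e1 : i = ℓ := by omega
       have e2 : j = 0 := by omega
       rw [e1, e2]
       exact Set.pair_comm ℓ 0)

private lemma aux_svsx (p m q : ℕ) {ℓ : ℕ} (hp : 1 ≤ p) (hℓ : 1 ≤ ℓ)
    (hm : 2 * (p + ℓ) + 1 ≤ m) (hpq : p = 2 * q + 2)
    (a b : ℕ → ℕ)
    (ha : ∀ i ≤ 2 * p, a i =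
      if i = 2 * q then p - 1 else if i = 2 * p then p + ℓ - 1
      else if i ≤ p then m - p + i + 1 else i - p - 1)
    (hb : ∀ i ≤ ℓ, b i = if i = 0 then p + ℓ else if i = ℓ then p + ℓ else p + i - 1) :
    ∀ i ≤ 2 * p, ∀ j ≤ ℓ, a i ≠ b j := by
  intro i hi j hj
  rw [ha i hi, hb j hj]
  split_ifs <;> omega

private lemma aux_svsy (p m q : ℕ) {ℓ : ℕ} (hp : 1 ≤ p) (hℓ : 1 ≤ ℓ)
    (hm : 2 * (p + ℓ) + 1 ≤ m) (hpq : p = 2 * q + 2)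
    (a c : ℕ → ℕ)
    (ha : ∀ i ≤ 2 * p, a i =
      if i = 2 * q then p - 1 else if i = 2 * p then p + ℓ - 1
      else if i ≤ p then m - p + i + 1 else i - p - 1)
    (hc : ∀ i < ℓ, c i = m - p - i) :
    ∀ i ≤ 2 * p, ∀ j < ℓ, a i ≠ c j := by
  intro i hi j hj
  rw [ha i hi, hc j hj]
  split_ifs <;> omega

private lemma aux_sxsy (p m : ℕ) {ℓ : ℕ} (hp : 1 ≤ p) (hℓ : 1 ≤ ℓ)
    (hm : 2 * (p + ℓ) + 1 ≤ m)
    (b c : ℕ → ℕ)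
    (hb : ∀ i ≤ ℓ, b i = if i = 0 then p + ℓ else if i = ℓ then p + ℓ else p + i - 1)
    (hc : ∀ i < ℓ, c i = m - p - i) :
    ∀ i ≤ ℓ, ∀ j < ℓ, b i ≠ c j := by
  intro i hi j hj
  rw [hb i hi, hc j hj]
  split_ifs <;> omega

/-- Let `p ≥ 1` be even, `ℓ ≥ 1`, `m ≥ 2(p+ℓ)+1`. Consider the tree `T₁` formed by a
path `(v₀, …, v_{2p})` with edges `e_i = v_{i−1}v_i`, together with a path
`(x₀ = v_{2p+1}, x₁, …, x_ℓ)` attached at `v_{2p}` via the edge `e_{2p+1} = v_{2p}x₀`,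
and pendant vertices `y₀, …, y_{ℓ−1}` with edges `x_i y_i`. Here `φe i`, `φx i`, `φy i`
are the labels of `e_i`, `x_i x_{i+1}`, `x_i y_i`, and `sv i`, `sx i`, `sy i` are the
vertex sums at `v_i`, `x_i`, `y_i` in `T₁`. Labels: swapped labels
`φ(e_{2i−1}) = m−p+i`, `φ(e_{2i}) = i` for `1 ≤ i ≤ (p−2)/2`; base labels
`φ(e_{2i+1}) = i+1` for `(p−2)/2 ≤ i ≤ p−1` and `φ(e_{2i}) = m−p+i` for
`(p−2)/2 < i ≤ p`; `φ(e_{2p+1}) = p+ℓ+1`, `φ(x_i x_{i+1}) = p+i+1` and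
`φ(x_i y_i) = m−p−i` for `0 ≤ i ≤ ℓ−1`. Then the set of labels used is
`[1, p+ℓ+1] ∪ [m−p−ℓ+1, m]`; the residues of the vertex sums modulo `m+2` form
`[0, p+ℓ] ∪ ([m−p−ℓ+1, m+1] \ {m−1})`; the only two vertices with equal residue are
`x₀` and `x_ℓ`; and they nevertheless have different vertex sums:
`s(x₀) = m+p+ℓ+2 > p+ℓ = s(x_ℓ)`. -/
theorem stmt15 (p ℓ m : ℕ) (hp : 1 ≤ p) (hpeven : Even p) (hℓ : 1 ≤ ℓ)
    (hm : 2 * (p + ℓ) + 1 ≤ m)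
    (φe φx φy : ℕ → ℕ)
    (hswap : ∀ i, 1 ≤ i → i ≤ (p - 2) / 2 →
      φe (2 * i - 1) = m - p + i ∧ φe (2 * i) = i)
    (hbaseodd : ∀ i, (p - 2) / 2 ≤ i → i ≤ p - 1 → φe (2 * i + 1) = i + 1)
    (hbaseeven : ∀ i, (p - 2) / 2 < i → i ≤ p → φe (2 * i) = m - p + i)
    (hlast : φe (2 * p + 1) = p + ℓ + 1)
    (hφx : ∀ i < ℓ, φx i = p + i + 1)
    (hφy : ∀ i < ℓ, φy i = m - p - i)
    (sv sx sy : ℕ → ℕ)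
    (hsv0 : sv 0 = φe 1)
    (hsvi : ∀ i, 1 ≤ i → i ≤ 2 * p → sv i = φe i + φe (i + 1))
    (hsx0 : sx 0 = φe (2 * p + 1) + φx 0 + φy 0)
    (hsxi : ∀ i, 1 ≤ i → i ≤ ℓ - 1 → sx i = φx (i - 1) + φx i + φy i)
    (hsxl : sx ℓ = φx (ℓ - 1))
    (hsy : ∀ i < ℓ, sy i = φy i) :
    -- the set of labels used
    ({n : ℕ | ∃ i, 1 ≤ i ∧ i ≤ 2 * p + 1 ∧ φe i = n} ∪
      {n : ℕ | ∃ i < ℓ, φx i = n} ∪ {n : ℕ | ∃ i < ℓ, φy i = n} =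
      Set.Icc 1 (p + ℓ + 1) ∪ Set.Icc (m - p - ℓ + 1) m) ∧
    -- the set of residues of the vertex sums modulo m+2
    ({x : ℕ | ∃ i ≤ 2 * p, sv i % (m + 2) = x} ∪
      {x : ℕ | ∃ i ≤ ℓ, sx i % (m + 2) = x} ∪
      {x : ℕ | ∃ i < ℓ, sy i % (m + 2) = x} =
      Set.Icc 0 (p + ℓ) ∪ (Set.Icc (m - p - ℓ + 1) (m + 1) \ {m - 1})) ∧
    -- the only two vertices with equal residue are x₀ and x_ℓ
    (∀ i ≤ 2 * p, ∀ j ≤ 2 * p, sv i % (m + 2) = sv j % (m + 2) → i = j) ∧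
    (∀ i ≤ ℓ, ∀ j ≤ ℓ, sx i % (m + 2) = sx j % (m + 2) →
      i = j ∨ ({i, j} : Set ℕ) = {0, ℓ}) ∧
    (∀ i < ℓ, ∀ j < ℓ, sy i % (m + 2) = sy j % (m + 2) → i = j) ∧
    (∀ i ≤ 2 * p, ∀ j ≤ ℓ, sv i % (m + 2) ≠ sx j % (m + 2)) ∧
    (∀ i ≤ 2 * p, ∀ j < ℓ, sv i % (m + 2) ≠ sy j % (m + 2)) ∧
    (∀ i ≤ ℓ, ∀ j < ℓ, sx i % (m + 2) ≠ sy j % (m + 2)) ∧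
    -- x₀ and x_ℓ nevertheless have different vertex sums
    (sx 0 = m + p + ℓ + 2 ∧ sx ℓ = p + ℓ) := by
  obtain ⟨k, hk⟩ := hpeven
  obtain ⟨q, hpq⟩ : ∃ q, p = 2 * q + 2 := ⟨k - 1, by omega⟩
  have hq : (p - 2) / 2 = q := by omega
  have he_ol : ∀ j, 1 ≤ j → j ≤ q → φe (2 * j - 1) = m - p + j := by
    intro j h1 h2; exact (hswap j h1 (by omega)).1
  have he_el : ∀ j, 1 ≤ j → j ≤ q → φe (2 * j) = j := by
    intro j h1 h2; exact (hswap j h1 (by omega)).2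
  have he_oh : ∀ j, q ≤ j → j ≤ p - 1 → φe (2 * j + 1) = j + 1 := by
    intro j h1 h2; exact hbaseodd j (by omega) h2
  have he_eh : ∀ j, q < j → j ≤ p → φe (2 * j) = m - p + j := by
    intro j h1 h2; exact hbaseeven j (by omega) h2
  clear hswap hbaseodd hbaseeven hq
  have hsv_main : ∀ i, i ≤ 2 * p - 1 → i ≠ 2 * q → sv i = m - p + i + 1 := by
    intro i hi hne
    by_cases hi0 : i = 0
    · subst hi0
      have h2 := he_ol 1 le_rfl (by omega)
      norm_num at h2
      rw [hsv0]
      omega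
    · have h1 := hsvi i (by omega) (by omega)
      rcases Nat.even_or_odd i with ⟨j, hj⟩ | ⟨j, hj⟩
      · have hij : i = 2 * j := by omega
        subst hij
        by_cases hjq : j < q
        · have h2 := he_el j (by omega) (by omega)
          have h3 := he_ol (j + 1) (by omega) (by omega)
          rw [show 2 * (j + 1) - 1 = 2 * j + 1 by omega] at h3
          omega
        · have h2 := he_eh j (by omega) (by omega)
          have h3 := he_oh j (by omega) (by omega)
          omega
      · subst hj
        by_cases hjq : j + 1 ≤ q
        · have h2 := he_ol (j + 1) (by omega) hjq
          rw [show 2 * (j + 1) - 1 = 2 * j + 1 by omega] at h2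
          have h3 := he_el (j + 1) (by omega) hjq
          rw [show 2 * (j + 1) = 2 * j + 1 + 1 by omega] at h3
          omega
        · have h2 := he_oh j (by omega) (by omega)
          have h3 := he_eh (j + 1) (by omega) (by omega)
          rw [show 2 * (j + 1) = 2 * j + 1 + 1 by omega] at h3
          omega
  have hsv_q : sv (2 * q) = p - 1 := by
    by_cases hq0 : q = 0
    · rw [hq0]
      have h2 := he_oh 0 (by omega) (by omega)
      norm_num at h2
      show sv 0 = p - 1
      rw [hsv0, h2]
      omega
    · have h1 := hsvi (2 * q) (by omega) (by omega)
      have h2 := he_el q (by omega) le_rfl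
      have h3 := he_oh q le_rfl (by omega)
      omega
  have hsv_p : sv (2 * p) = m + p + ℓ + 1 := by
    have h1 := hsvi (2 * p) (by omega) le_rfl
    have h2 := he_eh p (by omega) le_rfl
    omega
  have hsx0' : sx 0 = m + p + ℓ + 2 := by
    have h2 := hφx 0 (by omega)
    have h3 := hφy 0 (by omega)
    omega
  have hsxm : ∀ i, 1 ≤ i → i ≤ ℓ - 1 → sx i = m + p + i + 1 := by
    intro i h1 h2
    have h := hsxi i h1 h2
    have ha := hφx (i - 1) (by omega)
    have hb := hφx i (by omega)
    have hc := hφy i (by omega)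
    omega
  have hsxl' : sx ℓ = p + ℓ := by
    have h2 := hφx (ℓ - 1) (by omega)
    omega
  have hsy' : ∀ i < ℓ, sy i = m - p - i := by
    intro i h; rw [hsy i h, hφy i h]
  have hmod1 : ∀ a, a < m + 2 → a % (m + 2) = a := fun a h => Nat.mod_eq_of_lt h
  have hmod2 : ∀ a, m + 2 ≤ a → a < 2 * (m + 2) → a % (m + 2) = a - (m + 2) := by
    intro a h1 h2
    rw [Nat.mod_eq_sub_mod h1]
    exact Nat.mod_eq_of_lt (by omega)
  have hrsv : ∀ i ≤ 2 * p, sv i % (m + 2) =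
      if i = 2 * q then p - 1 else if i = 2 * p then p + ℓ - 1
      else if i ≤ p then m - p + i + 1 else i - p - 1 := by
    intro i hi
    by_cases h1 : i = 2 * q
    · subst h1
      rw [if_pos rfl, hsv_q]
      exact hmod1 _ (by omega)
    · rw [if_neg h1]
      by_cases h2 : i = 2 * p
      · subst h2
        rw [if_pos rfl, hsv_p, hmod2 (m + p + ℓ + 1) (by omega) (by omega)]
        omega
      · rw [if_neg h2]
        have hmain := hsv_main i (by omega) h1
        by_cases h3 : i ≤ p
        · rw [if_pos h3, hmain]
          exact hmod1 _ (by omega)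
        · rw [if_neg h3, hmain, hmod2 (m - p + i + 1) (by omega) (by omega)]
          omega
  have hrsx : ∀ i ≤ ℓ, sx i % (m + 2) =
      if i = 0 then p + ℓ else if i = ℓ then p + ℓ else p + i - 1 := by
    intro i hi
    by_cases h1 : i = 0
    · subst h1
      rw [if_pos rfl, hsx0', hmod2 (m + p + ℓ + 2) (by omega) (by omega)]
      omega
    · rw [if_neg h1]
      by_cases h2 : i = ℓ
      · subst h2
        rw [if_pos rfl, hsxl']
        exact hmod1 _ (by omega)
      · rw [if_neg h2, hsxm i (by omega) (by omega),
          hmod2 (m + p + i + 1) (by omega) (by omega)]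
        omega
  have hrsy : ∀ i < ℓ, sy i % (m + 2) = m - p - i := by
    intro i h
    rw [hsy' i h]
    exact hmod1 _ (by omega)
  exact ⟨aux_labels p m q hp hℓ hm hpq φe φx φy he_ol he_el he_oh he_eh hlast hφx hφy,
    aux_resset p m q hp hℓ hm hpq _ _ _ hrsv hrsx hrsy,
    aux_svinj p m q hp hℓ hm hpq _ hrsv,
    aux_sxpair p m hp hℓ hm _ hrsx,
    fun i hi j hj h => by rw [hrsy i hi, hrsy j hj] at h; omega,
    aux_svsx p m q hp hℓ hm hpq _ _ hrsv hrsx,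
    aux_svsy p m q hp hℓ hm hpq _ _ hrsv hrsy,
    aux_sxsy p m hp hℓ hm _ _ hrsx hrsy,
    hsx0', hsxl'⟩
end
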